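/- Let G = Θ(2, l2, 2) where l2 is odd and l2 ≥ 3. Then P_ℓ(G,3) = P(G,3). -/

import Mathlib

open SimpleGraph Finset

/-- A proper `L`-coloring of `G`: each vertex gets a color from its list and adjacent
vertices get different colors. -/
def ProperLColoring {V : Type*} (G : SimpleGraph V) (L : V → Finset ℕ) (f : V → ℕ) : Prop :=
  (∀ v, f v ∈ L v) ∧ ∀ ⦃u w⦄, G.Adj u w → f u ≠ f w

/-- `P(G,L)`: the number of proper `L`-colorings of `G`. -/
noncomputable def PList {V : Type*} (G : SimpleGraph V) (L : V → Finset ℕ) : ℕ :=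
  Nat.card {f : V → ℕ // ProperLColoring G L f}

/-- `P(G,m)`: the number of proper colorings of `G` with colors from `{1, …, m}`. -/
noncomputable def PChrom {V : Type*} (G : SimpleGraph V) (m : ℕ) : ℕ :=
  PList G (fun _ => Finset.Icc 1 m)

/-- The list color function `P_ℓ(G,m)`: the minimum of `P(G,L)` over all `m`-assignments. -/
noncomputable def PListFn {V : Type*} (G : SimpleGraph V) (m : ℕ) : ℕ :=
  sInf {n | ∃ L : V → Finset ℕ, (∀ v, (L v).card = m) ∧ n = PList G L}

/-- `G` is enumeratively chromatic-choosable: `P_ℓ(G,m) = P(G,m)` for all `m ∈ ℕ = {1,2,…}`. -/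
def EnumChromChoosable {V : Type*} (G : SimpleGraph V) : Prop :=
  ∀ m : ℕ, 1 ≤ m → PListFn G m = PChrom G m

/-- Vertices of the theta graph `Θ(l1,l2,l3)`: the end vertices `u = Sum.inl false` and
`v = Sum.inl true`, together with the `lᵢ - 1` internal vertices of the `i`-th path. -/
abbrev ThetaVert (l1 l2 l3 : ℕ) : Type :=
  Bool ⊕ (Σ i : Fin 3, Fin (![l1, l2, l3] i - 1))

/-- Edges of the theta graph (up to symmetrization): the internal vertices of the `i`-th path,
in order, form a path from `u` to `v`; if some path has length 1 then `u` and `v` are adjacent. -/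
def thetaRel (l1 l2 l3 : ℕ) : ThetaVert l1 l2 l3 → ThetaVert l1 l2 l3 → Prop :=
  fun a b =>
    match a, b with
    | Sum.inl false, Sum.inl true => l1 = 1 ∨ l2 = 1 ∨ l3 = 1
    | Sum.inl false, Sum.inr ⟨_, j⟩ => (j : ℕ) = 0
    | Sum.inr ⟨i, j⟩, Sum.inl true => (j : ℕ) + 2 = ![l1, l2, l3] i
    | Sum.inr ⟨i, j⟩, Sum.inr ⟨i', j'⟩ => i = i' ∧ (j : ℕ) + 1 = (j' : ℕ)
    | _, _ => False

/-- The theta graph `Θ(l1,l2,l3)`: two end vertices joined by three internally disjoint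
paths of lengths `l1`, `l2`, `l3`. -/
def thetaGraph (l1 l2 l3 : ℕ) : SimpleGraph (ThetaVert l1 l2 l3) :=
  SimpleGraph.fromRel (thetaRel l1 l2 l3)

/-- A DP-cover `(L, H)` of `G`. -/
structure DPCover {V : Type*} (G : SimpleGraph V) (W : Type*) where
  H : SimpleGraph W
  L : V → Set W
  partition : ∀ w : W, ∃! v : V, w ∈ L v
  matching : ∀ ⦃u v : V⦄, G.Adj u v → ∀ ⦃x y y' : W⦄, x ∈ L u → y ∈ L v → y' ∈ L v →
      H.Adj x y → H.Adj x y' → y = y'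
  cross : ∀ ⦃x y : W⦄, H.Adj x y → ∃ u v, G.Adj u v ∧ x ∈ L u ∧ y ∈ L v

/-- A proper `H`-coloring: an independent transversal of the cover. -/
def DPCover.IsProperColoring {V W : Type*} {G : SimpleGraph V} (C : DPCover G W)
    (T : Set W) : Prop :=
  (∀ v : V, ∃! w : W, w ∈ T ∧ w ∈ C.L v) ∧ ∀ ⦃x y⦄, x ∈ T → y ∈ T → ¬ C.H.Adj x y

/-- `P_DP(G, H)`: the number of proper `H`-colorings of `G`. -/
noncomputable def PDPCount {V W : Type*} {G : SimpleGraph V} (C : DPCover G W) : ℕ :=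
  Nat.card {T : Set W // C.IsProperColoring T}

/-- The DP color function `P_DP(G,m)`: the minimum of `P_DP(G,H)` over all `m`-fold covers. -/
noncomputable def PDP {V : Type*} (G : SimpleGraph V) (m : ℕ) : ℕ :=
  sInf {n | ∃ (W : Type) (C : DPCover G W), (∀ v, Nat.card ↥(C.L v) = m) ∧ n = PDPCount C}

/-- A cover is full if the matching between the lists of adjacent vertices is perfect. -/
def DPCover.IsFull {V W : Type*} {G : SimpleGraph V} (C : DPCover G W) : Prop :=
  ∀ ⦃u v : V⦄, G.Adj u v → ∀ x ∈ C.L u, ∃! y, y ∈ C.L v ∧ C.H.Adj x y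
open Finset

/-- Number of proper colorings of internal vertices of a path `c - x₀ - ⋯ - x_{k-1} - d`. -/
def pcount : (k : ℕ) → (Fin k → Finset ℕ) → ℕ → ℕ → ℕ
  | 0, _, c, d => if c = d then 0 else 1
  | k+1, Ls, c, d => ∑ e ∈ (Ls 0).erase c, pcount k (fun i => Ls i.succ) e d

lemma pcount_succ (k : ℕ) (Ls : Fin (k+1) → Finset ℕ) (c d : ℕ) :
    pcount (k+1) Ls c d = ∑ e ∈ (Ls 0).erase c, pcount k (fun i => Ls i.succ) e d := rfl

/-- Master lemma: single / pair / triple lower bounds on `pcount`. -/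
lemma pcount_SPR : ∀ (k : ℕ) (Ls : Fin k → Finset ℕ), (∀ i, (Ls i).card = 3) →
    (∀ c d, 2^(k+1) ≤ 3 * pcount k Ls c d + (2 - k % 2)) ∧
    (∀ c c' d, c ≠ c' →
      2^(k+2) ≤ 3 * (pcount k Ls c d + pcount k Ls c' d) + (1 + k % 2)) ∧
    (∀ c c' c'' d, c ≠ c' → c ≠ c'' → c' ≠ c'' →
      2^(k+1) ≤ pcount k Ls c d + pcount k Ls c' d + pcount k Ls c'' d) := by
  intro k
  induction k with
  | zero =>
    intro Ls _
    refine ⟨fun c d => ?_, fun c c' d hcc => ?_, fun c c' c'' d h1 h2 h3 => ?_⟩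
    · simp only [pcount]; split <;> omega
    · simp only [pcount]
      by_cases h1 : c = d <;> by_cases h2 : c' = d <;> simp [h1, h2] at * <;> omega
    · simp only [pcount]
      by_cases g1 : c = d <;> by_cases g2 : c' = d <;> by_cases g3 : c'' = d <;>
        simp [g1, g2, g3] at * <;> omega
  | succ k ih =>
    intro Ls hLs
    obtain ⟨ihS, ihP, ihR⟩ := ih (fun i => Ls i.succ) (fun i => hLs i.succ)
    have hL0 : (Ls 0).card = 3 := hLs 0
    have hpow1 : (2:ℕ)^(k+1) = 2 * 2^k := by ring
    have hpow2 : (2:ℕ)^(k+2) = 4 * 2^k := by ring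
    have hpow3 : (2:ℕ)^(k+3) = 8 * 2^k := by ring
    have hpow4 : (2:ℕ)^(k+1+1) = 4 * 2^k := by ring
    have hpow5 : (2:ℕ)^(k+1+2) = 8 * 2^k := by ring
    have hpow0 : 1 ≤ (2:ℕ)^k := Nat.one_le_two_pow
    have h2elt : ∀ c, c ∈ Ls 0 → ∃ x y, x ≠ y ∧ (Ls 0).erase c = {x, y} := by
      intro c hc
      have : ((Ls 0).erase c).card = 2 := by
        rw [Finset.card_erase_of_mem hc, hL0]
      obtain ⟨x, y, hxy, hE⟩ := Finset.card_eq_two.mp this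
      exact ⟨x, y, hxy, hE⟩
    obtain ⟨x, y, z, hxy, hxz, hyz, hE3⟩ := Finset.card_eq_three.mp hL0
    have hsumL0 : ∀ d, ∑ e ∈ Ls 0, pcount k (fun i => Ls i.succ) e d
        = pcount k (fun i => Ls i.succ) x d + pcount k (fun i => Ls i.succ) y d
          + pcount k (fun i => Ls i.succ) z d := by
      intro d
      rw [hE3, Finset.sum_insert (by simp [hxy, hxz]), Finset.sum_pair hyz, add_assoc]
    have hval_mem : ∀ c d x' y', x' ≠ y' → (Ls 0).erase c = {x', y'} →
        pcount (k+1) Ls c d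
          = pcount k (fun i => Ls i.succ) x' d + pcount k (fun i => Ls i.succ) y' d := by
      intro c d x' y' hxy' hE
      rw [pcount_succ, hE, Finset.sum_pair hxy']
    have hval_nmem : ∀ c d, c ∉ Ls 0 → pcount (k+1) Ls c d
        = pcount k (fun i => Ls i.succ) x d + pcount k (fun i => Ls i.succ) y d
          + pcount k (fun i => Ls i.succ) z d := by
      intro c d hc
      rw [pcount_succ, Finset.erase_eq_of_notMem hc, hsumL0]
    have S : ∀ c d, 2^(k+2) ≤ 3 * pcount (k+1) Ls c d + (2 - (k+1) % 2) := by
      intro c d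
      by_cases hc : c ∈ Ls 0
      · obtain ⟨x', y', hxy', hE⟩ := h2elt c hc
        rw [hval_mem c d x' y' hxy' hE]
        have := ihP x' y' d hxy'
        omega
      · rw [hval_nmem c d hc]
        have := ihR x y z d hxy hxz hyz
        omega
    refine ⟨S, ?_, ?_⟩
    · -- pair bound
      have key : ∀ c c' d, c ≠ c' → c ∈ Ls 0 → c' ∉ Ls 0 →
          2^(k+3) ≤ 3 * (pcount (k+1) Ls c d + pcount (k+1) Ls c' d) + (1 + (k+1) % 2) := by
        intro c c' d hcc hc hc'
        obtain ⟨x', y', hxy', hE⟩ := h2elt c hc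
        rw [hval_mem c d x' y' hxy' hE, hval_nmem c' d hc']
        have h1 := ihP x' y' d hxy'
        have hx'm : x' ∈ (Ls 0).erase c := by rw [hE]; simp
        have hy'm : y' ∈ (Ls 0).erase c := by rw [hE]; simp
        have h2 : 2^(k+1) ≤ pcount k (fun i => Ls i.succ) c d
            + pcount k (fun i => Ls i.succ) x' d + pcount k (fun i => Ls i.succ) y' d := by
          refine ihR c x' y' d ?_ ?_ hxy'
          · exact fun h => (Finset.mem_erase.mp hx'm).1 h.symm
          · exact fun h => (Finset.mem_erase.mp hy'm).1 h.symm
        have h3 : ∑ e ∈ Ls 0, pcount k (fun i => Ls i.succ) e d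
            = pcount k (fun i => Ls i.succ) c d
              + (pcount k (fun i => Ls i.succ) x' d + pcount k (fun i => Ls i.succ) y' d) := by
          rw [← Finset.sum_erase_add _ _ hc, hE, Finset.sum_pair hxy', add_comm]
        have h4 := hsumL0 d
        omega
      intro c c' d hcc
      by_cases hc : c ∈ Ls 0 <;> by_cases hc' : c' ∈ Ls 0
      · have hc'e : c' ∈ (Ls 0).erase c := Finset.mem_erase.mpr ⟨hcc.symm, hc'⟩
        have hcard1 : (((Ls 0).erase c).erase c').card = 1 := by
          rw [Finset.card_erase_of_mem hc'e, Finset.card_erase_of_mem hc, hL0]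
        obtain ⟨g, hg⟩ := Finset.card_eq_one.mp hcard1
        have hgmem : g ∈ ((Ls 0).erase c).erase c' := by rw [hg]; simp
        have hgc' : g ≠ c' := (Finset.mem_erase.mp hgmem).1
        have hgc : g ≠ c := (Finset.mem_erase.mp (Finset.mem_erase.mp hgmem).2).1
        have hEc : (Ls 0).erase c = {c', g} := by
          rw [← Finset.insert_erase hc'e, hg]
        have hEc' : (Ls 0).erase c' = {c, g} := by
          have hce : c ∈ (Ls 0).erase c' := Finset.mem_erase.mpr ⟨hcc, hc⟩
          have hcomm : ((Ls 0).erase c').erase c = ((Ls 0).erase c).erase c' :=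
            Finset.erase_right_comm
          rw [← Finset.insert_erase hce, hcomm, hg]
        rw [hval_mem c d c' g hgc'.symm hEc, hval_mem c' d c g hgc.symm hEc']
        have h1 := ihR c c' g d hcc (fun h => hgc h.symm) (fun h => hgc' h.symm)
        have h2 := ihS g d
        omega
      · have := key c c' d hcc hc hc'; omega
      · have := key c' c d (Ne.symm hcc) hc' hc; omega
      · rw [hval_nmem c d hc, hval_nmem c' d hc']
        have := ihR x y z d hxy hxz hyz
        omega
    · -- triple bound
      intro c1 c2 c3 d h12 h13 h23
      have hkey : ∀ c, ∑ e ∈ (Ls 0).erase c, pcount k (fun i => Ls i.succ) e d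
          + (if c ∈ Ls 0 then pcount k (fun i => Ls i.succ) c d else 0)
          = ∑ e ∈ Ls 0, pcount k (fun i => Ls i.succ) e d := by
        intro c
        by_cases h : c ∈ Ls 0
        · simp only [h, if_pos]
          exact Finset.sum_erase_add _ _ h
        · simp [h, Finset.erase_eq_of_notMem h]
      have e1 := hkey c1
      have e2 := hkey c2
      have e3 := hkey c3
      have hbound : (if c1 ∈ Ls 0 then pcount k (fun i => Ls i.succ) c1 d else 0)
          + (if c2 ∈ Ls 0 then pcount k (fun i => Ls i.succ) c2 d else 0)
          + (if c3 ∈ Ls 0 then pcount k (fun i => Ls i.succ) c3 d else 0)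
          ≤ ∑ e ∈ Ls 0, pcount k (fun i => Ls i.succ) e d := by
        have hs : ∑ x ∈ ({c1, c2, c3} : Finset ℕ),
            (if x ∈ Ls 0 then pcount k (fun i => Ls i.succ) x d else 0)
            = (if c1 ∈ Ls 0 then pcount k (fun i => Ls i.succ) c1 d else 0)
            + ((if c2 ∈ Ls 0 then pcount k (fun i => Ls i.succ) c2 d else 0)
            + (if c3 ∈ Ls 0 then pcount k (fun i => Ls i.succ) c3 d else 0)) := by
          rw [Finset.sum_insert (by simp [h12, h13]), Finset.sum_pair h23]
        rw [← add_assoc] at hs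
        rw [← hs, ← Finset.sum_filter]
        exact Finset.sum_le_sum_of_subset (fun t ht => (Finset.mem_filter.mp ht).2)
      have hfull : 2^(k+1) ≤ ∑ e ∈ Ls 0, pcount k (fun i => Ls i.succ) e d := by
        rw [hsumL0 d]; exact ihR x y z d hxy hxz hyz
      have hv1 : pcount (k+1) Ls c1 d
          = ∑ e ∈ (Ls 0).erase c1, pcount k (fun i => Ls i.succ) e d := pcount_succ ..
      have hv2 : pcount (k+1) Ls c2 d
          = ∑ e ∈ (Ls 0).erase c2, pcount k (fun i => Ls i.succ) e d := pcount_succ ..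
      have hv3 : pcount (k+1) Ls c3 d
          = ∑ e ∈ (Ls 0).erase c3, pcount k (fun i => Ls i.succ) e d := pcount_succ ..
      omega

/-- Row sum bound: summing over a 3-list of end colors. -/
lemma pcount_rowsum : ∀ (k : ℕ) (Ls : Fin k → Finset ℕ), (∀ i, (Ls i).card = 3) →
    ∀ (c : ℕ) (D : Finset ℕ), D.card = 3 → 2^(k+1) ≤ ∑ d ∈ D, pcount k Ls c d := by
  intro k
  induction k with
  | zero =>
    intro Ls _ c D hD
    have hsub : ∑ d ∈ D.erase c, pcount 0 Ls c d ≤ ∑ d ∈ D, pcount 0 Ls c d :=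
      Finset.sum_le_sum_of_subset (Finset.erase_subset _ _)
    have heq : ∑ d ∈ D.erase c, pcount 0 Ls c d = (D.erase c).card := by
      rw [Finset.card_eq_sum_ones]
      refine Finset.sum_congr rfl fun d hd => ?_
      have : c ≠ d := fun h => (Finset.mem_erase.mp hd).1 h.symm
      simp [pcount, this]
    have hcard : 2 ≤ (D.erase c).card := by
      by_cases h : c ∈ D
      · rw [Finset.card_erase_of_mem h, hD]
      · rw [Finset.erase_eq_of_notMem h, hD]; omega
    omega
  | succ k ih =>
    intro Ls hLs c D hD
    have hcard : 2 ≤ ((Ls 0).erase c).card := by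
      by_cases h : c ∈ Ls 0
      · rw [Finset.card_erase_of_mem h, hLs 0]
      · rw [Finset.erase_eq_of_notMem h, hLs 0]; omega
    have : ∑ d ∈ D, pcount (k+1) Ls c d
        = ∑ e ∈ (Ls 0).erase c, ∑ d ∈ D, pcount k (fun i => Ls i.succ) e d := by
      simp only [pcount_succ]
      rw [Finset.sum_comm]
    rw [this]
    have hle : ∑ e ∈ (Ls 0).erase c, (2:ℕ)^(k+1)
        ≤ ∑ e ∈ (Ls 0).erase c, ∑ d ∈ D, pcount k (fun i => Ls i.succ) e d :=
      Finset.sum_le_sum fun e _ => ih (fun i => Ls i.succ) (fun i => hLs i.succ) e D hD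
    rw [Finset.sum_const, smul_eq_mul] at hle
    have hpow : (2:ℕ)^(k+1+1) = 2 * 2^(k+1) := by ring
    have := Nat.mul_le_mul_right (2^(k+1)) hcard
    omega

/-- `(αₘ, βₘ)`: number of proper colorings of internal vertices of a path of length `m`
with all lists equal to a fixed 3-set, end colors in the set, equal resp. distinct. -/
def ab : ℕ → ℕ × ℕ
  | 0 => (1, 0)
  | m+1 => ((ab m).2 * 2, (ab m).1 + (ab m).2)

lemma ab_val : ∀ m : ℕ, (m % 2 = 0 → 3 * (ab m).1 = 2^m + 2 ∧ 3 * (ab m).2 + 1 = 2^m) ∧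
    (m % 2 = 1 → 3 * (ab m).1 + 2 = 2^m ∧ 3 * (ab m).2 = 2^m + 1) := by
  intro m
  induction m with
  | zero => simp [ab]
  | succ m ih =>
    have hpow : (2:ℕ)^(m+1) = 2 * 2^m := by ring
    simp only [ab]
    omega

lemma pcount_const : ∀ (k : ℕ) (C : Finset ℕ), C.card = 3 → ∀ c d, c ∈ C → d ∈ C →
    pcount k (fun _ => C) c d = if c = d then (ab (k+1)).1 else (ab (k+1)).2 := by
  intro k
  induction k with
  | zero =>
    intro C _ c d _ _
    simp only [pcount, ab]
  | succ k ih =>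
    intro C hC c d hc hd
    rw [pcount_succ]
    by_cases hcd : c = d
    · subst hcd
      have : ∀ e ∈ C.erase c, pcount k (fun _ => C) e c = (ab (k+1)).2 := by
        intro e he
        rw [ih C hC e c (Finset.mem_of_mem_erase he) hc,
          if_neg (Finset.mem_erase.mp he).1]
      rw [Finset.sum_congr rfl this, Finset.sum_const, smul_eq_mul,
        Finset.card_erase_of_mem hc, hC]
      rw [if_pos rfl]
      simp only [ab]
      ring
    · have hdm : d ∈ C.erase c := Finset.mem_erase.mpr ⟨fun h => hcd h.symm, hd⟩
      rw [← Finset.sum_erase_add _ _ hdm]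
      have hcard1 : ((C.erase c).erase d).card = 1 := by
        rw [Finset.card_erase_of_mem hdm, Finset.card_erase_of_mem hc, hC]
      obtain ⟨g, hg⟩ := Finset.card_eq_one.mp hcard1
      have hgmem : g ∈ (C.erase c).erase d := by rw [hg]; simp
      have hgd : g ≠ d := (Finset.mem_erase.mp hgmem).1
      have hgC : g ∈ C := Finset.mem_of_mem_erase (Finset.mem_of_mem_erase hgmem)
      rw [hg, Finset.sum_singleton, ih C hC g d hgC hd, if_neg hgd,
        ih C hC d d hd hd, if_pos rfl]
      simp only [ab, if_neg hcd]
      omega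

/-- Recursive predicate: `g` properly colors the internal vertices of the path
`c - g 0 - g 1 - ⋯ - g (k-1) - d` (with `c ≠ d` required when `k = 0`). -/
def pathProp : (k : ℕ) → (Fin k → Finset ℕ) → ℕ → ℕ → (Fin k → ℕ) → Prop
  | 0, _, c, d, _ => c ≠ d
  | k+1, Ls, c, d, g => g 0 ∈ Ls 0 ∧ g 0 ≠ c ∧
      pathProp k (fun i => Ls i.succ) (g 0) d (fun i => g i.succ)

/-- Explicit form of `pathProp`. -/
def pathCond (k : ℕ) (Ls : Fin k → Finset ℕ) (c d : ℕ) (g : Fin k → ℕ) : Prop :=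
  (∀ i, g i ∈ Ls i) ∧ (k = 0 → c ≠ d) ∧
  (∀ h : 0 < k, g ⟨0, h⟩ ≠ c) ∧
  (∀ h : 0 < k, g ⟨k-1, by omega⟩ ≠ d) ∧
  (∀ (j : ℕ) (h : j + 1 < k), g ⟨j, by omega⟩ ≠ g ⟨j+1, h⟩)

lemma pathProp_iff_cond : ∀ (k : ℕ) (Ls : Fin k → Finset ℕ) (c d : ℕ) (g : Fin k → ℕ),
    pathProp k Ls c d g ↔ pathCond k Ls c d g := by
  intro k
  induction k with
  | zero =>
    intro Ls c d g
    constructor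
    · intro h
      exact ⟨fun i => i.elim0, fun _ => h, fun h0 => absurd h0 (by omega),
        fun h0 => absurd h0 (by omega), fun j hj => absurd hj (by omega)⟩
    · intro h
      exact h.2.1 rfl
  | succ k ih =>
    intro Ls c d g
    simp only [pathProp, ih]
    constructor
    · rintro ⟨h0m, h0c, hmem, h0d, hfirst, hlast, hchain⟩
      refine ⟨?_, by omega, ?_, ?_, ?_⟩
      · intro i
        refine Fin.cases ?_ ?_ i
        · exact h0m
        · exact fun j => hmem j
      · intro _
        have : (⟨0, by omega⟩ : Fin (k+1)) = 0 := rfl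
        rw [this]; exact h0c
      · intro _
        by_cases hk : k = 0
        · subst hk
          exact h0d rfl
        · have hkpos : 0 < k := by omega
          have hh := hlast hkpos
          have : (⟨k+1-1, by omega⟩ : Fin (k+1)) = Fin.succ ⟨k-1, by omega⟩ := by
            apply Fin.ext; simp; omega
          rw [this]; exact hh
      · intro j hj
        match j, hj with
        | 0, hj =>
          by_cases hk : k = 0
          · omega
          · have hh := hfirst (by omega)
            have h1 : (⟨1, hj⟩ : Fin (k+1)) = Fin.succ ⟨0, by omega⟩ := rfl
            have h2 : (⟨0, by omega⟩ : Fin (k+1)) = 0 := rfl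
            rw [h1, h2]
            exact fun he => hh he.symm
        | j+1, hj =>
          have hh := hchain j (by omega)
          have h1 : (⟨j+1, by omega⟩ : Fin (k+1)) = Fin.succ ⟨j, by omega⟩ := rfl
          have h2 : (⟨j+1+1, hj⟩ : Fin (k+1)) = Fin.succ ⟨j+1, by omega⟩ := rfl
          rw [h1, h2]
          exact hh
    · rintro ⟨hmem, -, hfirst, hlast, hchain⟩
      have h0 : (0 : Fin (k+1)) = ⟨0, by omega⟩ := rfl
      refine ⟨hmem 0, by rw [h0]; exact hfirst (by omega), fun i => hmem i.succ, ?_, ?_, ?_, ?_⟩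
      · intro hk
        subst hk
        have := hlast (by omega)
        simpa using this
      · intro hk
        exact fun he => (hchain 0 (by omega)) he.symm
      · intro hk
        show g ((⟨k-1, by omega⟩ : Fin k).succ) ≠ d
        have h1 : (⟨k-1, by omega⟩ : Fin k).succ = (⟨k+1-1, by omega⟩ : Fin (k+1)) := by
          apply Fin.ext; simp; omega
        rw [h1]
        exact hlast (by omega)
      · intro j hj
        show g ((⟨j, by omega⟩ : Fin k).succ) ≠ g ((⟨j+1, hj⟩ : Fin k).succ)
        have h1 : (⟨j, by omega⟩ : Fin k).succ = (⟨j+1, by omega⟩ : Fin (k+1)) := rfl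
        have h2 : (⟨j+1, hj⟩ : Fin k).succ = (⟨j+1+1, by omega⟩ : Fin (k+1)) := rfl
        rw [h1, h2]
        exact hchain (j+1) (by omega)

instance pathFinite (k : ℕ) (Ls : Fin k → Finset ℕ) (c d : ℕ) :
    Finite {g : Fin k → ℕ // pathProp k Ls c d g} := by
  have : ∀ g : {g : Fin k → ℕ // pathProp k Ls c d g}, ∀ i, g.val i ∈ Ls i := by
    intro g i
    exact ((pathProp_iff_cond k Ls c d g.val).mp g.property).1 i
  refine Finite.of_injective
    (fun g => (fun i => (⟨g.val i, this g i⟩ : {x // x ∈ Ls i}) : ∀ i, {x // x ∈ Ls i}))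
    ?_
  intro g1 g2 h
  apply Subtype.ext
  funext i
  exact congrArg Subtype.val (congrFun h i)

lemma natCard_sigma {ι : Type*} [Fintype ι] (f : ι → Type*) [∀ i, Finite (f i)] :
    Nat.card (Sigma f) = ∑ i, Nat.card (f i) := by
  have : ∀ i, Fintype (f i) := fun i => Fintype.ofFinite _
  letI := this
  simp only [Nat.card_eq_fintype_card]
  exact Fintype.card_sigma

lemma card_pathT : ∀ (k : ℕ) (Ls : Fin k → Finset ℕ) (c d : ℕ),
    Nat.card {g : Fin k → ℕ // pathProp k Ls c d g} = pcount k Ls c d := by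
  intro k
  induction k with
  | zero =>
    intro Ls c d
    by_cases hcd : c = d
    · have : IsEmpty {g : Fin 0 → ℕ // pathProp 0 Ls c d g} := by
        constructor; rintro ⟨g, hg⟩; exact hg hcd
      rw [Nat.card_of_isEmpty]
      simp [pcount, hcd]
    · have e : {g : Fin 0 → ℕ // pathProp 0 Ls c d g} ≃ Unit :=
        { toFun := fun _ => ()
          invFun := fun _ => ⟨fun i => i.elim0, hcd⟩
          left_inv := fun g => Subtype.ext (funext fun i => i.elim0)
          right_inv := fun _ => rfl }
      rw [Nat.card_congr e]
      simp [pcount, hcd]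
  | succ k ih =>
    intro Ls c d
    have e : {g : Fin (k+1) → ℕ // pathProp (k+1) Ls c d g}
        ≃ Σ e : {x // x ∈ (Ls 0).erase c},
            {g : Fin k → ℕ // pathProp k (fun i => Ls i.succ) e.val d g} :=
      { toFun := fun g => ⟨⟨g.val 0, Finset.mem_erase.mpr ⟨g.property.2.1, g.property.1⟩⟩,
          ⟨fun i => g.val i.succ, g.property.2.2⟩⟩
        invFun := fun p => ⟨Fin.cons p.1.val p.2.val, by
          refine ⟨?_, ?_, ?_⟩
          · exact (Finset.mem_erase.mp p.1.property).2
          · exact (Finset.mem_erase.mp p.1.property).1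
          · exact p.2.property⟩
        left_inv := fun g => Subtype.ext (funext fun i => by
          refine Fin.cases ?_ ?_ i
          · rfl
          · intro j; rfl)
        right_inv := fun p => rfl }
    rw [Nat.card_congr e, natCard_sigma, pcount_succ]
    rw [← Finset.sum_coe_sort ((Ls 0).erase c)
      (fun e => pcount k (fun i => Ls i.succ) e d)]
    exact Finset.sum_congr rfl fun e _ => ih (fun i => Ls i.succ) e.val d

open SimpleGraph

/-! ### The theta graph `Θ(2, n+3, 2)` -/

lemma lt03 : (0:ℕ) < 3 := Nat.zero_lt_succ 2
lemma lt13 : (1:ℕ) < 3 := Nat.one_lt_succ_succ 1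
lemma lt23 : (2:ℕ) < 3 := Nat.lt_succ_self 2

def tvU (n : ℕ) : ThetaVert 2 (n+3) 2 := Sum.inl false
def tvV (n : ℕ) : ThetaVert 2 (n+3) 2 := Sum.inl true
def tvA (n : ℕ) : ThetaVert 2 (n+3) 2 := Sum.inr ⟨⟨0, lt03⟩, ⟨0, Nat.zero_lt_one⟩⟩
def tvB (n : ℕ) : ThetaVert 2 (n+3) 2 := Sum.inr ⟨⟨2, lt23⟩, ⟨0, Nat.zero_lt_one⟩⟩
def tvP (n : ℕ) (j : Fin (n+2)) : ThetaVert 2 (n+3) 2 := Sum.inr ⟨⟨1, lt13⟩, j⟩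

/-- Characterization of properness over the edges of `Θ(2,n+3,2)`. -/
lemma proper_edges_iff (n : ℕ) (f : ThetaVert 2 (n+3) 2 → ℕ) :
    (∀ ⦃x y⦄, (thetaGraph 2 (n+3) 2).Adj x y → f x ≠ f y) ↔
    (f (tvU n) ≠ f (tvA n) ∧ f (tvA n) ≠ f (tvV n) ∧
     f (tvU n) ≠ f (tvB n) ∧ f (tvB n) ≠ f (tvV n) ∧
     f (tvU n) ≠ f (tvP n ⟨0, by omega⟩) ∧ f (tvP n ⟨n+1, by omega⟩) ≠ f (tvV n) ∧
     ∀ (j : ℕ) (h : j+1 < n+2), f (tvP n ⟨j, by omega⟩) ≠ f (tvP n ⟨j+1, h⟩)) := by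
  constructor
  · intro hf
    have hUA : (thetaGraph 2 (n+3) 2).Adj (tvU n) (tvA n) := by
      rw [thetaGraph, SimpleGraph.fromRel_adj]
      exact ⟨by simp [tvU, tvA], Or.inl rfl⟩
    have hAV : (thetaGraph 2 (n+3) 2).Adj (tvA n) (tvV n) := by
      rw [thetaGraph, SimpleGraph.fromRel_adj]
      exact ⟨by simp [tvV, tvA], Or.inl rfl⟩
    have hUB : (thetaGraph 2 (n+3) 2).Adj (tvU n) (tvB n) := by
      rw [thetaGraph, SimpleGraph.fromRel_adj]
      exact ⟨by simp [tvU, tvB], Or.inl rfl⟩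
    have hBV : (thetaGraph 2 (n+3) 2).Adj (tvB n) (tvV n) := by
      rw [thetaGraph, SimpleGraph.fromRel_adj]
      exact ⟨by simp [tvV, tvB], Or.inl rfl⟩
    have hUP : (thetaGraph 2 (n+3) 2).Adj (tvU n) (tvP n ⟨0, by omega⟩) := by
      rw [thetaGraph, SimpleGraph.fromRel_adj]
      exact ⟨by simp [tvU, tvP], Or.inl rfl⟩
    have hPV : (thetaGraph 2 (n+3) 2).Adj (tvP n ⟨n+1, by omega⟩) (tvV n) := by
      rw [thetaGraph, SimpleGraph.fromRel_adj]
      exact ⟨by simp [tvV, tvP], Or.inl rfl⟩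
    have hPP : ∀ (j : ℕ) (h : j+1 < n+2),
        (thetaGraph 2 (n+3) 2).Adj (tvP n ⟨j, by omega⟩) (tvP n ⟨j+1, h⟩) := by
      intro j h
      rw [thetaGraph, SimpleGraph.fromRel_adj]
      refine ⟨fun hcontra => ?_, Or.inl ⟨rfl, rfl⟩⟩
      have h2 := congrArg (fun x : ThetaVert 2 (n+3) 2 => match x with
        | Sum.inr p => (p.2 : ℕ)
        | Sum.inl _ => 0) hcontra
      have h3 : j = j + 1 := h2
      omega
    exact ⟨hf hUA, hf hAV, hf hUB, hf hBV, hf hUP, hf hPV, fun j h => hf (hPP j h)⟩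
  · rintro ⟨h1, h2, h3, h4, h5, h6, h7⟩
    have key : ∀ x y, thetaRel 2 (n+3) 2 x y → x ≠ y → f x ≠ f y := by
      intro x y hrel hne
      rcases x with (bx | ⟨⟨ix, hix⟩, jx⟩) <;> rcases y with (by' | ⟨⟨iy, hiy⟩, jy⟩)
      · -- inl / inl
        rcases bx <;> rcases by'
        · exact absurd rfl hne
        · have : (2 = 1 ∨ n+3 = 1 ∨ 2 = 1) := hrel
          omega
        · exact absurd hrel (fun h => h)
        · exact absurd rfl hne
      · -- inl / inr
        rcases bx
        · -- u adjacent to first internal vertices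
          have hj : (jy : ℕ) = 0 := hrel
          interval_cases iy
          · have : jy = ⟨0, Nat.zero_lt_one⟩ := Fin.ext hj
            rw [this]
            exact h1
          · have : jy = ⟨0, Nat.succ_pos (n+1)⟩ := Fin.ext hj
            rw [this]
            exact h5
          · have : jy = ⟨0, Nat.zero_lt_one⟩ := Fin.ext hj
            rw [this]
            exact h3
        · exact absurd hrel (fun h => h)
      · -- inr / inl
        rcases by'
        · exact absurd hrel (fun h => h)
        · have hj : (jx : ℕ) + 2 = ![2, n+3, 2] ⟨ix, hix⟩ := hrel
          interval_cases ix
          · have hj' : (jx : ℕ) + 2 = 2 := hj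
            have : jx = ⟨0, Nat.zero_lt_one⟩ := Fin.ext (by omega)
            rw [this]
            exact h2
          · have hj' : (jx : ℕ) + 2 = n + 3 := hj
            have : jx = ⟨n+1, Nat.lt_succ_self (n+1)⟩ := Fin.ext (by simp only []; omega)
            rw [this]
            exact h6
          · have hj' : (jx : ℕ) + 2 = 2 := hj
            have : jx = ⟨0, Nat.zero_lt_one⟩ := Fin.ext (by omega)
            rw [this]
            exact h4
      · -- inr / inr
        have hr : (⟨ix, hix⟩ : Fin 3) = ⟨iy, hiy⟩ ∧ (jx : ℕ) + 1 = (jy : ℕ) := hrel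
        obtain ⟨hii, hjj⟩ := hr
        have hii' : ix = iy := by simpa [Fin.mk.injEq] using hii
        subst hii'
        interval_cases ix
        · have : (jx : ℕ) < 1 := jx.isLt
          have : (jy : ℕ) < 1 := jy.isLt
          omega
        · have hjylt : (jy : ℕ) < n + 2 := jy.isLt
          have hlt : (jx : ℕ) + 1 < n + 2 := by omega
          have hjy : jy = ⟨(jx : ℕ) + 1, hlt⟩ := Fin.ext (by simp only []; omega)
          rw [hjy]
          have hjxlt : (jx : ℕ) < n + 2 := jx.isLt
          have hjx : (⟨(jx : ℕ), hjxlt⟩ : Fin (![2, n+3, 2] ⟨1, hix⟩ - 1)) = jx :=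
            Fin.ext rfl
          have := h7 (jx : ℕ) hlt
          exact this
        · have : (jx : ℕ) < 1 := jx.isLt
          have : (jy : ℕ) < 1 := jy.isLt
          omega
    intro x y hadj
    rw [thetaGraph, SimpleGraph.fromRel_adj] at hadj
    obtain ⟨hne, hor⟩ := hadj
    rcases hor with h | h
    · exact key x y h hne
    · exact (key y x h (Ne.symm hne)).symm


set_option maxHeartbeats 2000000 in
/-- Decomposition of the number of proper list colorings of `Θ(2,n+3,2)`. -/
lemma PList_theta (n : ℕ) (L : ThetaVert 2 (n+3) 2 → Finset ℕ) :
    PList (thetaGraph 2 (n+3) 2) L =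
      ∑ c ∈ L (tvU n), ∑ d ∈ L (tvV n),
        (L (tvA n) \ {c, d}).card *
          ((L (tvB n) \ {c, d}).card * pcount (n+2) (fun j => L (tvP n j)) c d) := by
  classical
  have E : {f : ThetaVert 2 (n+3) 2 → ℕ // ProperLColoring (thetaGraph 2 (n+3) 2) L f}
      ≃ Σ c : {x // x ∈ L (tvU n)}, Σ d : {x // x ∈ L (tvV n)},
        ({x // x ∈ L (tvA n) \ {c.val, d.val}} × {x // x ∈ L (tvB n) \ {c.val, d.val}} ×
         {g : Fin (n+2) → ℕ //
            pathProp (n+2) (fun j => L (tvP n j)) c.val d.val g}) :=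
    { toFun := fun f =>
        ⟨⟨f.val (tvU n), f.property.1 _⟩, ⟨f.val (tvV n), f.property.1 _⟩,
         ⟨f.val (tvA n), by
            obtain ⟨h1, h2, h3, h4, h5, h6, h7⟩ :=
              (proper_edges_iff n f.val).mp f.property.2
            rw [Finset.mem_sdiff]
            refine ⟨f.property.1 _, ?_⟩
            simp only [Finset.mem_insert, Finset.mem_singleton]
            push_neg
            exact ⟨fun h => h1 h.symm, h2⟩⟩,
         ⟨f.val (tvB n), by
            obtain ⟨h1, h2, h3, h4, h5, h6, h7⟩ :=
              (proper_edges_iff n f.val).mp f.property.2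
            rw [Finset.mem_sdiff]
            refine ⟨f.property.1 _, ?_⟩
            simp only [Finset.mem_insert, Finset.mem_singleton]
            push_neg
            exact ⟨fun h => h3 h.symm, h4⟩⟩,
         ⟨fun j => f.val (tvP n j), by
            obtain ⟨h1, h2, h3, h4, h5, h6, h7⟩ :=
              (proper_edges_iff n f.val).mp f.property.2
            rw [pathProp_iff_cond]
            exact ⟨fun j => f.property.1 _, by omega, fun h he => h5 he.symm,
              fun h => h6, fun j h => h7 j h⟩⟩⟩
      invFun := fun t =>
        ⟨fun x => match x with
          | Sum.inl false => t.1.val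
          | Sum.inl true => t.2.1.val
          | Sum.inr ⟨⟨0, _⟩, _⟩ => t.2.2.1.val
          | Sum.inr ⟨⟨1, _⟩, j⟩ => t.2.2.2.2.val j
          | Sum.inr ⟨⟨2, _⟩, _⟩ => t.2.2.2.1.val
          | Sum.inr ⟨⟨_+3, h⟩, _⟩ => False.elim (by omega), by
          obtain ⟨⟨c, hc⟩, ⟨d, hd⟩, ⟨a, ha⟩, ⟨b, hb⟩, ⟨g, hg⟩⟩ := t
          obtain ⟨hgmem, -, hgfirst, hglast, hgchain⟩ :=
            (pathProp_iff_cond (n+2) (fun j => L (tvP n j)) c d g).mp hg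
          have haA : a ∈ L (tvA n) := (Finset.mem_sdiff.mp ha).1
          have haCD : a ≠ c ∧ a ≠ d := by
            have := (Finset.mem_sdiff.mp ha).2
            simp only [Finset.mem_insert, Finset.mem_singleton] at this
            push_neg at this
            exact this
          have hbB : b ∈ L (tvB n) := (Finset.mem_sdiff.mp hb).1
          have hbCD : b ≠ c ∧ b ≠ d := by
            have := (Finset.mem_sdiff.mp hb).2
            simp only [Finset.mem_insert, Finset.mem_singleton] at this
            push_neg at this
            exact this
          constructor
          · -- membership
            rintro (bx | ⟨⟨ix, hix⟩, jx⟩)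
            · rcases bx
              · exact hc
              · exact hd
            · interval_cases ix
              · have hjl : (jx : ℕ) < 1 := jx.isLt
                have : jx = ⟨0, Nat.zero_lt_one⟩ := Fin.ext (show (jx:ℕ) = 0 by omega)
                rw [this]
                exact haA
              · exact hgmem jx
              · have hjl : (jx : ℕ) < 1 := jx.isLt
                have : jx = ⟨0, Nat.zero_lt_one⟩ := Fin.ext (show (jx:ℕ) = 0 by omega)
                rw [this]
                exact hbB
          · -- proper on edges
            rw [proper_edges_iff n]
            exact ⟨fun h => haCD.1 h.symm, haCD.2, fun h => hbCD.1 h.symm, hbCD.2,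
              fun h => (hgfirst (by omega)) h.symm, hglast (by omega),
              fun j h => hgchain j h⟩⟩
      left_inv := by
        intro f
        apply Subtype.ext
        funext x
        rcases x with (bx | ⟨⟨ix, hix⟩, jx⟩)
        · rcases bx <;> rfl
        · interval_cases ix
          · have hjl : (jx : ℕ) < 1 := jx.isLt
            have hx : (Sum.inr ⟨⟨0, hix⟩, jx⟩ : ThetaVert 2 (n+3) 2) = tvA n := by
              have : jx = ⟨0, Nat.zero_lt_one⟩ := Fin.ext (show (jx:ℕ) = 0 by omega)
              rw [tvA, this]
            rw [hx]
            rfl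
          · rfl
          · have hjl : (jx : ℕ) < 1 := jx.isLt
            have hx : (Sum.inr ⟨⟨2, hix⟩, jx⟩ : ThetaVert 2 (n+3) 2) = tvB n := by
              have : jx = ⟨0, Nat.zero_lt_one⟩ := Fin.ext (show (jx:ℕ) = 0 by omega)
              rw [tvB, this]
            rw [hx]
            rfl
      right_inv := fun t => rfl }
  rw [PList, Nat.card_congr E, natCard_sigma]
  rw [← Finset.sum_coe_sort (L (tvU n))]
  refine Finset.sum_congr rfl fun c _ => ?_
  rw [natCard_sigma, ← Finset.sum_coe_sort (L (tvV n))]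
  refine Finset.sum_congr rfl fun d _ => ?_
  rw [Nat.card_prod, Nat.card_prod, Nat.card_eq_finsetCard, Nat.card_eq_finsetCard,
    card_pathT]


/-! ### The finite inequality `∑ A·B ≥ 18` -/

lemma inter_card_le (S : Finset ℕ) (c d : ℕ) :
    (S ∩ {c, d}).card ≤ (if c ∈ S then 1 else 0) + (if d ∈ S then 1 else 0) := by
  classical
  have hsub : S ∩ {c, d} ⊆ (if c ∈ S then {c} else ∅) ∪ (if d ∈ S then {d} else ∅) := by
    intro x hx
    rw [Finset.mem_inter] at hx
    obtain ⟨hxS, hxcd⟩ := hx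
    simp only [Finset.mem_insert, Finset.mem_singleton] at hxcd
    rcases hxcd with rfl | rfl
    · simp [hxS]
    · simp [hxS]
  calc (S ∩ {c, d}).card ≤ _ := Finset.card_le_card hsub
  _ ≤ ((if c ∈ S then ({c} : Finset ℕ) else ∅)).card
      + ((if d ∈ S then ({d} : Finset ℕ) else ∅)).card := Finset.card_union_le _ _
  _ ≤ _ := by split_ifs <;> simp

lemma inter_card_le_same (S : Finset ℕ) (c : ℕ) :
    (S ∩ {c, c}).card ≤ (if c ∈ S then 1 else 0) := by
  classical
  have hsub : S ∩ {c, c} ⊆ (if c ∈ S then {c} else ∅) := by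
    intro x hx
    rw [Finset.mem_inter] at hx
    obtain ⟨hxS, hxcd⟩ := hx
    simp only [Finset.mem_insert, Finset.mem_singleton, or_self] at hxcd
    subst hxcd
    simp [hxS]
  calc (S ∩ {c, c}).card ≤ _ := Finset.card_le_card hsub
  _ ≤ _ := by split_ifs <;> simp

lemma sdiff_card_lb (S : Finset ℕ) (hS : S.card = 3) (c d : ℕ) :
    1 + (if c ∈ S then 0 else 1) + (if d ∈ S then 0 else 1) ≤ (S \ {c, d}).card := by
  have h1 := Finset.card_inter_add_card_sdiff S {c, d}
  have h2 := inter_card_le S c d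
  by_cases hc : c ∈ S <;> by_cases hd : d ∈ S <;>
    simp only [hc, hd, if_true, if_false] at * <;> omega

lemma sdiff_card_lb_same (S : Finset ℕ) (hS : S.card = 3) (c : ℕ) :
    2 + (if c ∈ S then 0 else 1) ≤ (S \ {c, c}).card := by
  have h1 := Finset.card_inter_add_card_sdiff S {c, c}
  have h2 := inter_card_le_same S c
  by_cases hc : c ∈ S <;> simp only [hc, if_true, if_false] at * <;> omega

lemma mul_lb_off (A B : ℕ) (hA : 1 ≤ A) (hB : 1 ≤ B) : A + B ≤ A * B + 1 := by
  nlinarith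

lemma mul_lb_diag (A B : ℕ) (hA : 2 ≤ A) (hB : 2 ≤ B) : 2*A + 2*B ≤ A * B + 4 := by
  nlinarith

/-- Pointwise bound `r(c,d) ≤ A(c,d)·B(c,d)`. -/
lemma AB_pointwise (Sa Sb : Finset ℕ) (ha : Sa.card = 3) (hb : Sb.card = 3) (c d : ℕ) :
    1 + (if c = d then 3 else 0) + (if c ∈ Sa then 0 else 1) + (if d ∈ Sa then 0 else 1)
      + (if c ∈ Sb then 0 else 1) + (if d ∈ Sb then 0 else 1)
    ≤ (Sa \ {c, d}).card * (Sb \ {c, d}).card := by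
  by_cases hcd : c = d
  · subst hcd
    have hA := sdiff_card_lb_same Sa ha c
    have hB := sdiff_card_lb_same Sb hb c
    have hm := mul_lb_diag _ _ (le_trans (by omega) hA) (le_trans (by omega) hB)
    simp only [if_pos rfl]
    by_cases h1 : c ∈ Sa <;> by_cases h2 : c ∈ Sb <;>
      simp only [h1, h2, if_true, if_false] at * <;> nlinarith
  · have hA := sdiff_card_lb Sa ha c d
    have hB := sdiff_card_lb Sb hb c d
    have hm := mul_lb_off _ _ (le_trans (by omega) hA) (le_trans (by omega) hB)
    simp only [if_neg hcd]
    by_cases h1 : c ∈ Sa <;> by_cases h2 : d ∈ Sa <;> by_cases h3 : c ∈ Sb <;>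
      by_cases h4 : d ∈ Sb <;> simp only [h1, h2, h3, h4, if_true, if_false] at * <;>
      nlinarith

lemma sdiff_pair_card_bound (Lu Lv S : Finset ℕ) (hu : Lu.card = 3) (hv : Lv.card = 3)
    (hS : S.card = 3) :
    6 ≤ (Lu \ S).card + (Lv \ S).card + (Lu ∩ Lv).card + 3 := by
  have h1 : (Lu ∪ Lv) \ S = (Lu \ S) ∪ (Lv \ S) := Finset.union_sdiff_distrib Lu Lv S
  have h2 : ((Lu ∪ Lv) \ S).card ≤ (Lu \ S).card + (Lv \ S).card := by
    rw [h1]; exact Finset.card_union_le _ _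
  have h3 := Finset.card_inter_add_card_sdiff (Lu ∪ Lv) S
  have h4 : ((Lu ∪ Lv) ∩ S).card ≤ S.card :=
    Finset.card_le_card Finset.inter_subset_right
  have h5 := Finset.card_union_add_card_inter Lu Lv
  omega

/-- The key finite inequality: the weights sum to at least 18. -/
lemma AB_sum_ge (Lu Lv Sa Sb : Finset ℕ) (hu : Lu.card = 3) (hv : Lv.card = 3)
    (ha : Sa.card = 3) (hb : Sb.card = 3) :
    18 ≤ ∑ c ∈ Lu, ∑ d ∈ Lv, (Sa \ {c, d}).card * (Sb \ {c, d}).card := by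
  classical
  have hpt : ∑ c ∈ Lu, ∑ d ∈ Lv,
      (1 + (if c = d then 3 else 0) + (if c ∈ Sa then 0 else 1) + (if d ∈ Sa then 0 else 1)
        + (if c ∈ Sb then 0 else 1) + (if d ∈ Sb then 0 else 1))
      ≤ ∑ c ∈ Lu, ∑ d ∈ Lv, (Sa \ {c, d}).card * (Sb \ {c, d}).card :=
    Finset.sum_le_sum fun c _ => Finset.sum_le_sum fun d _ => AB_pointwise Sa Sb ha hb c d
  refine le_trans ?_ hpt
  have hind : ∀ (T : Finset ℕ), T.card = 3 → ∀ S : Finset ℕ,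
      ∑ d ∈ T, (if d ∈ S then 0 else 1) = (T \ S).card := by
    intro T hT S
    rw [show T \ S = T.filter (fun d => d ∉ S) by
      ext x; simp [Finset.mem_sdiff, Finset.mem_filter]]
    rw [Finset.card_eq_sum_ones, Finset.sum_filter]
    exact Finset.sum_congr rfl fun d _ => by split_ifs <;> simp_all
  have exp : ∀ c, ∑ d ∈ Lv,
      (1 + (if c = d then 3 else 0) + (if c ∈ Sa then 0 else 1) + (if d ∈ Sa then 0 else 1)
        + (if c ∈ Sb then 0 else 1) + (if d ∈ Sb then 0 else 1))
      = 3 + (if c ∈ Lv then 3 else 0) + 3 * (if c ∈ Sa then 0 else 1)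
        + (Lv \ Sa).card + 3 * (if c ∈ Sb then 0 else 1) + (Lv \ Sb).card := by
    intro c
    rw [Finset.sum_add_distrib, Finset.sum_add_distrib, Finset.sum_add_distrib,
      Finset.sum_add_distrib, Finset.sum_add_distrib]
    rw [Finset.sum_const, hv, smul_eq_mul, mul_one,
      Finset.sum_ite_eq Lv c (fun _ => 3),
      Finset.sum_const, hv, smul_eq_mul,
      hind Lv hv Sa, hind Lv hv Sb]
    rw [Finset.sum_const, hv, smul_eq_mul]
  rw [Finset.sum_congr rfl fun c _ => exp c]
  rw [Finset.sum_add_distrib, Finset.sum_add_distrib, Finset.sum_add_distrib,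
    Finset.sum_add_distrib, Finset.sum_add_distrib]
  have f1 : ∑ _c ∈ Lu, (3:ℕ) = 9 := by rw [Finset.sum_const, hu, smul_eq_mul]
  have f2 : ∑ c ∈ Lu, (if c ∈ Lv then 3 else 0) = 3 * (Lu ∩ Lv).card := by
    have hfe : Lu.filter (fun c => c ∈ Lv) = Lu ∩ Lv := by
      ext x; simp [Finset.mem_inter, Finset.mem_filter]
    rw [← Finset.sum_filter, hfe, Finset.sum_const, smul_eq_mul, mul_comm]
  have f3 : ∑ c ∈ Lu, 3 * (if c ∈ Sa then 0 else 1) = 3 * (Lu \ Sa).card := by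
    rw [← Finset.mul_sum, hind Lu hu Sa]
  have f4 : ∑ _c ∈ Lu, (Lv \ Sa).card = 3 * (Lv \ Sa).card := by
    rw [Finset.sum_const, hu, smul_eq_mul]
  have f5 : ∑ c ∈ Lu, 3 * (if c ∈ Sb then 0 else 1) = 3 * (Lu \ Sb).card := by
    rw [← Finset.mul_sum, hind Lu hu Sb]
  have f6 : ∑ _c ∈ Lu, (Lv \ Sb).card = 3 * (Lv \ Sb).card := by
    rw [Finset.sum_const, hu, smul_eq_mul]
  rw [f1, f2, f3, f4, f5, f6]
  have g1 := sdiff_pair_card_bound Lu Lv Sa hu hv ha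
  have g2 := sdiff_pair_card_bound Lu Lv Sb hu hv hb
  have g3 : (Lu ∩ Lv).card ≤ 3 := by
    have := Finset.card_le_card (Finset.inter_subset_left (s₁ := Lu) (s₂ := Lv))
    omega
  omega


lemma weight_step (w N a : ℕ) (hw : 1 ≤ w) (ha : a ≤ N) : w*a + N ≤ w*N + a := by
  nlinarith

/-- Lower bound for any 3-assignment on `Θ(2,n+3,2)` with `n` even. -/
lemma PList_lb (n : ℕ) (hn : n % 2 = 0) (L : ThetaVert 2 (n+3) 2 → Finset ℕ)
    (hL : ∀ v, (L v).card = 3) :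
    18 * (ab (n+3)).1 + 6 ≤ PList (thetaGraph 2 (n+3) 2) L := by
  classical
  rw [PList_theta]
  have habv := (ab_val (n+3)).2 (by omega)
  have hcards : ∀ i : Fin (n+2), ((fun j => L (tvP n j)) i).card = 3 := fun i => hL _
  have hptS := (pcount_SPR (n+2) (fun j => L (tvP n j)) hcards).1
  -- single bound : α ≤ N c d
  have hα : ∀ c d, (ab (n+3)).1 ≤ pcount (n+2) (fun j => L (tvP n j)) c d := by
    intro c d
    have := hptS c d
    have hmod : (n+2) % 2 = 0 := by omega
    have hpow : (2:ℕ)^(n+2+1) = 2^(n+3) := by norm_num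
    omega
  -- row bound
  have hrow : ∀ c, 3 * (ab (n+3)).1 + 2
      ≤ ∑ d ∈ L (tvV n), pcount (n+2) (fun j => L (tvP n j)) c d := by
    intro c
    have := pcount_rowsum (n+2) (fun j => L (tvP n j)) hcards c (L (tvV n)) (hL _)
    have hpow : (2:ℕ)^(n+2+1) = 2^(n+3) := by norm_num
    omega
  -- rewrite summand with explicit weight
  have hrw : ∀ c, ∑ d ∈ L (tvV n),
      (L (tvA n) \ {c, d}).card *
        ((L (tvB n) \ {c, d}).card * pcount (n+2) (fun j => L (tvP n j)) c d)
      = ∑ d ∈ L (tvV n),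
      ((L (tvA n) \ {c, d}).card * (L (tvB n) \ {c, d}).card) *
        pcount (n+2) (fun j => L (tvP n j)) c d :=
    fun c => Finset.sum_congr rfl fun d _ => (mul_assoc _ _ _).symm
  rw [Finset.sum_congr rfl fun c _ => hrw c]
  -- per-row estimate
  have key : ∀ c, (ab (n+3)).1 *
      (∑ d ∈ L (tvV n), (L (tvA n) \ {c, d}).card * (L (tvB n) \ {c, d}).card) + 2
      ≤ ∑ d ∈ L (tvV n),
        ((L (tvA n) \ {c, d}).card * (L (tvB n) \ {c, d}).card) *
          pcount (n+2) (fun j => L (tvP n j)) c d := by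
    intro c
    have hw1 : ∀ d, 1 ≤ (L (tvA n) \ {c, d}).card * (L (tvB n) \ {c, d}).card := by
      intro d
      have h1 := sdiff_card_lb (L (tvA n)) (hL _) c d
      have h2 := sdiff_card_lb (L (tvB n)) (hL _) c d
      have : 1 ≤ (L (tvA n) \ {c, d}).card := by split_ifs at h1 <;> omega
      have : 1 ≤ (L (tvB n) \ {c, d}).card := by split_ifs at h2 <;> omega
      nlinarith
    have hsum : ∑ d ∈ L (tvV n),
        (((L (tvA n) \ {c, d}).card * (L (tvB n) \ {c, d}).card) * (ab (n+3)).1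
          + pcount (n+2) (fun j => L (tvP n j)) c d)
        ≤ ∑ d ∈ L (tvV n),
        (((L (tvA n) \ {c, d}).card * (L (tvB n) \ {c, d}).card) *
            pcount (n+2) (fun j => L (tvP n j)) c d + (ab (n+3)).1) :=
      Finset.sum_le_sum fun d _ => weight_step _ _ _ (hw1 d) (hα c d)
    rw [Finset.sum_add_distrib, Finset.sum_add_distrib, Finset.sum_const, hL _,
      smul_eq_mul] at hsum
    rw [← Finset.sum_mul] at hsum
    have := hrow c
    have hcomm : (∑ d ∈ L (tvV n), (L (tvA n) \ {c, d}).card * (L (tvB n) \ {c, d}).card)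
        * (ab (n+3)).1 = (ab (n+3)).1 *
        (∑ d ∈ L (tvV n), (L (tvA n) \ {c, d}).card * (L (tvB n) \ {c, d}).card) :=
      mul_comm _ _
    omega
  have htot : ∑ c ∈ L (tvU n), ((ab (n+3)).1 *
      (∑ d ∈ L (tvV n), (L (tvA n) \ {c, d}).card * (L (tvB n) \ {c, d}).card) + 2)
      ≤ ∑ c ∈ L (tvU n), ∑ d ∈ L (tvV n),
        ((L (tvA n) \ {c, d}).card * (L (tvB n) \ {c, d}).card) *
          pcount (n+2) (fun j => L (tvP n j)) c d :=
    Finset.sum_le_sum fun c _ => key c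
  rw [Finset.sum_add_distrib, Finset.sum_const, hL _, smul_eq_mul, ← Finset.mul_sum]
    at htot
  have hab18 := AB_sum_ge (L (tvU n)) (L (tvV n)) (L (tvA n)) (L (tvB n))
    (hL _) (hL _) (hL _) (hL _)
  have hmul : (ab (n+3)).1 * 18 ≤ (ab (n+3)).1 *
      (∑ c ∈ L (tvU n), ∑ d ∈ L (tvV n),
        (L (tvA n) \ {c, d}).card * (L (tvB n) \ {c, d}).card) :=
    Nat.mul_le_mul_left _ hab18
  omega

/-- Exact value of the chromatic count. -/
lemma PChrom_theta (n : ℕ) :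
    PChrom (thetaGraph 2 (n+3) 2) 3 = 12 * (ab (n+3)).1 + 6 * (ab (n+3)).2 := by
  classical
  rw [PChrom, PList_theta]
  have hC : (Finset.Icc 1 3 : Finset ℕ) = {1, 2, 3} := by decide
  simp only [hC]
  have hc3 : ({1, 2, 3} : Finset ℕ).card = 3 := by decide
  have hsum : ∀ F : ℕ → ℕ, ∑ c ∈ ({1, 2, 3} : Finset ℕ), F c = F 1 + F 2 + F 3 := by
    intro F
    rw [Finset.sum_insert (by decide), Finset.sum_insert (by decide),
      Finset.sum_singleton, add_assoc]
  rw [hsum]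
  rw [hsum, hsum, hsum]
  have hpc : ∀ c d : ℕ, c ∈ ({1,2,3} : Finset ℕ) → d ∈ ({1,2,3} : Finset ℕ) →
      pcount (n+2) (fun _ => ({1,2,3} : Finset ℕ)) c d
      = if c = d then (ab (n+3)).1 else (ab (n+3)).2 := by
    intro c d hc hd
    exact pcount_const (n+2) {1,2,3} hc3 c d hc hd
  rw [hpc 1 1 (by decide) (by decide), hpc 1 2 (by decide) (by decide),
    hpc 1 3 (by decide) (by decide), hpc 2 1 (by decide) (by decide),
    hpc 2 2 (by decide) (by decide), hpc 2 3 (by decide) (by decide),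
    hpc 3 1 (by decide) (by decide), hpc 3 2 (by decide) (by decide),
    hpc 3 3 (by decide) (by decide)]
  simp only [reduceIte]
  have e11 : (({1,2,3} : Finset ℕ) \ {1, 1}).card = 2 := by decide
  have e12 : (({1,2,3} : Finset ℕ) \ {1, 2}).card = 1 := by decide
  have e13 : (({1,2,3} : Finset ℕ) \ {1, 3}).card = 1 := by decide
  have e21 : (({1,2,3} : Finset ℕ) \ {2, 1}).card = 1 := by decide
  have e22 : (({1,2,3} : Finset ℕ) \ {2, 2}).card = 2 := by decide
  have e23 : (({1,2,3} : Finset ℕ) \ {2, 3}).card = 1 := by decide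
  have e31 : (({1,2,3} : Finset ℕ) \ {3, 1}).card = 1 := by decide
  have e32 : (({1,2,3} : Finset ℕ) \ {3, 2}).card = 1 := by decide
  have e33 : (({1,2,3} : Finset ℕ) \ {3, 3}).card = 2 := by decide
  rw [e11, e12, e13, e21, e22, e23, e31, e32, e33]
  rw [if_neg (by decide : ¬(1:ℕ) = 2), if_neg (by decide : ¬(1:ℕ) = 3),
    if_neg (by decide : ¬(2:ℕ) = 1), if_neg (by decide : ¬(2:ℕ) = 3),
    if_neg (by decide : ¬(3:ℕ) = 1), if_neg (by decide : ¬(3:ℕ) = 2)]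
  ring

theorem theta_two_odd_two_list_color_function_at_three (l2 : ℕ)
    (ho : Odd l2) (h3 : 3 ≤ l2) :
    PListFn (thetaGraph 2 l2 2) 3 = PChrom (thetaGraph 2 l2 2) 3 := by
  obtain ⟨n, rfl⟩ : ∃ n, l2 = n + 3 := ⟨l2 - 3, by omega⟩
  have hn : n % 2 = 0 := by
    obtain ⟨k, hk⟩ := ho
    omega
  apply le_antisymm
  · apply Nat.sInf_le
    exact ⟨fun _ => Finset.Icc 1 3, fun v => by simp, rfl⟩
  · apply le_csInf
    · exact ⟨PChrom (thetaGraph 2 (n+3) 2) 3,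
        fun _ => Finset.Icc 1 3, fun v => by simp, rfl⟩
    · rintro m ⟨L, hL3, rfl⟩
      have h1 := PList_lb n hn L hL3
      have h2 := PChrom_theta n
      have habv := (ab_val (n+3)).2 (by omega)
      omega
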